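/- Let G be a connected graph with at least one edge. Then the equivalence relation R on the arc set of G has exactly one equivalence class if G is not bipartite, and exactly two equivalence classes if G is bipartite. -/

import Mathlib

/-- An A-trail (alternating trail) in the mixed graph `(V, A)`: a sequence of `k ≥ 1`
pairwise distinct arcs `a 0, …, a (k-1)` of `G` with a vertex sequence
`v 0, …, v k` such that the `i`-th arc is `(v i, v (i+1))` or `(v (i+1), v i)`,
and consecutive arcs alternate in direction. -/
def IsATrail {V : Type*} (A : V → V → Prop) (k : ℕ) (a : ℕ → V × V) (v : ℕ → V) : Prop :=
  1 ≤ k ∧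
  (∀ i, i < k → A (a i).1 (a i).2) ∧
  (∀ i, i < k → ∀ j, j < k → a i = a j → i = j) ∧
  (∀ i, i < k → a i = (v i, v (i + 1)) ∨ a i = (v (i + 1), v i)) ∧
  (∀ i, i + 1 < k → (a i = (v i, v (i + 1)) ↔ a (i + 1) = (v (i + 2), v (i + 1))))

/-- The relation `R` on arcs: `x R y` iff some A-trail has first arc `x` and last arc `y`. -/
def ATrailRel {V : Type*} (A : V → V → Prop) (x y : V × V) : Prop :=
  ∃ k a v, IsATrail A k a v ∧ a 0 = x ∧ a (k - 1) = y

/-- A frontier vertex: a vertex incident with two arcs lying in different classes of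
the equivalence relation `ATrailRel`. -/
def IsFrontier {V : Type*} (A : V → V → Prop) (w : V) : Prop :=
  ∃ x y : V × V, A x.1 x.2 ∧ A y.1 y.2 ∧ (x.1 = w ∨ x.2 = w) ∧ (y.1 = w ∨ y.2 = w) ∧
    ¬ ATrailRel A x y

namespace Stmt9Aux

variable {V : Type*} (G : SimpleGraph V)

def rel (x y : {p : V × V // G.Adj p.1 p.2}) : Prop :=
  ATrailRel (fun s t => G.Adj s t) x.val y.val

variable {G}

lemma rel_refl (x : {p : V × V // G.Adj p.1 p.2}) : rel G x x := by
  refine ⟨1, fun _ => x.val, fun i => if i = 0 then x.val.1 else x.val.2,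
    ⟨le_refl 1, ?_, ?_, ?_, ?_⟩, rfl, rfl⟩
  · intro i _; exact x.property
  · intro i hi j hj _; omega
  · intro i hi
    left
    obtain rfl : i = 0 := by omega
    simp
  · intro i hi; omega

/-- Two arcs with the same head are related. -/
lemma rel_headShare {u v w : V} (h : G.Adj u v) (h' : G.Adj w v) (hne : u ≠ w) :
    rel G ⟨(u, v), h⟩ ⟨(w, v), h'⟩ := by
  refine ⟨2, fun i => if i = 0 then (u, v) else (w, v),
    fun i => if i = 0 then u else if i = 1 then v else w,
    ⟨by norm_num, ?_, ?_, ?_, ?_⟩, by norm_num, by norm_num⟩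
  · intro i hi
    by_cases h0 : i = 0 <;> simp [h0, h, h']
  · intro i hi j hj hij
    by_cases h0 : i = 0 <;> by_cases h1 : j = 0
    · omega
    · exact absurd (by simpa [h0, h1, Prod.ext_iff] using hij : u = w) hne
    · exact absurd (by simpa [h0, h1, Prod.ext_iff] using hij : w = u) (Ne.symm hne)
    · omega
  · intro i hi
    have : i = 0 ∨ i = 1 := by omega
    rcases this with rfl | rfl
    · left; simp
    · right; simp
  · intro i hi
    obtain rfl : i = 0 := by omega
    simp

/-- Two arcs with the same tail are related. -/
lemma rel_tailShare {u v w : V} (h : G.Adj u v) (h' : G.Adj u w) (hne : v ≠ w) :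
    rel G ⟨(u, v), h⟩ ⟨(u, w), h'⟩ := by
  refine ⟨2, fun i => if i = 0 then (u, v) else (u, w),
    fun i => if i = 0 then v else if i = 1 then u else w,
    ⟨by norm_num, ?_, ?_, ?_, ?_⟩, by norm_num, by norm_num⟩
  · intro i hi
    by_cases h0 : i = 0 <;> simp [h0, h, h']
  · intro i hi j hj hij
    by_cases h0 : i = 0 <;> by_cases h1 : j = 0
    · omega
    · exact absurd (by simpa [h0, h1, Prod.ext_iff] using hij : v = w) hne
    · exact absurd (by simpa [h0, h1, Prod.ext_iff] using hij : w = v) (Ne.symm hne)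
    · omega
  · intro i hi
    have : i = 0 ∨ i = 1 := by omega
    rcases this with rfl | rfl
    · right; simp
    · left; simp
  · intro i hi
    obtain rfl : i = 0 := by omega
    simp [Prod.ext_iff]
    constructor
    · intro ⟨h1, _⟩; exact absurd h1 (G.ne_of_adj h)
    · intro ⟨h1, _⟩; exact absurd h1 (G.ne_of_adj h')

def Q (x y : {p : V × V // G.Adj p.1 p.2}) : Prop :=
  Quot.mk (rel G) x = Quot.mk (rel G) y

lemma Q_headShare {u v w : V} (h : G.Adj u v) (h' : G.Adj w v) :
    Q ⟨(u, v), h⟩ ⟨(w, v), h'⟩ := by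
  by_cases hne : u = w
  · subst hne; rfl
  · exact Quot.sound (rel_headShare h h' hne)

lemma Q_tailShare {u v w : V} (h : G.Adj u v) (h' : G.Adj u w) :
    Q ⟨(u, v), h⟩ ⟨(u, w), h'⟩ := by
  by_cases hne : v = w
  · subst hne; rfl
  · exact Quot.sound (rel_tailShare h h' hne)

/-- Chaining head/tail shares along a walk. -/
lemma chain {u v : V} (p : G.Walk u v) :
    (∀ s (hs : G.Adj s u),
      (Even p.length → ∀ w (hw : G.Adj w v), Q ⟨(s, u), hs⟩ ⟨(w, v), hw⟩) ∧
      (Odd p.length → ∀ w (hw : G.Adj v w), Q ⟨(s, u), hs⟩ ⟨(v, w), hw⟩)) ∧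
    (∀ t (ht : G.Adj u t),
      (Even p.length → ∀ w (hw : G.Adj v w), Q ⟨(u, t), ht⟩ ⟨(v, w), hw⟩) ∧
      (Odd p.length → ∀ w (hw : G.Adj w v), Q ⟨(u, t), ht⟩ ⟨(w, v), hw⟩)) := by
  induction p with
  | nil =>
      refine ⟨fun s hs => ⟨fun _ w hw => Q_headShare hs hw, fun hodd => ?_⟩,
        fun t ht => ⟨fun _ w hw => Q_tailShare ht hw, fun hodd => ?_⟩⟩ <;>
        simp [SimpleGraph.Walk.length_nil, Nat.odd_iff] at hodd
  | @cons u u' v h q ih =>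
      constructor
      · intro s hs
        have step : Q ⟨(s, u), hs⟩ ⟨(u', u), h.symm⟩ := Q_headShare hs h.symm
        constructor
        · intro heven w hw
          have hq : Odd q.length := by
            simpa [SimpleGraph.Walk.length_cons, Nat.even_add_one,
              Nat.not_even_iff_odd] using heven
          exact step.trans ((ih.2 u h.symm).2 hq w hw)
        · intro hodd w hw
          have hq : Even q.length := by
            rw [SimpleGraph.Walk.length_cons, Nat.odd_add_one] at hodd
            exact Nat.not_odd_iff_even.mp hodd
          exact step.trans ((ih.2 u h.symm).1 hq w hw)
      · intro t ht
        have step : Q ⟨(u, t), ht⟩ ⟨(u, u'), h⟩ := Q_tailShare ht h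
        constructor
        · intro heven w hw
          have hq : Odd q.length := by
            simpa [SimpleGraph.Walk.length_cons, Nat.even_add_one,
              Nat.not_even_iff_odd] using heven
          exact step.trans ((ih.1 u h).2 hq w hw)
        · intro hodd w hw
          have hq : Even q.length := by
            rw [SimpleGraph.Walk.length_cons, Nat.odd_add_one] at hodd
            exact Nat.not_odd_iff_even.mp hodd
          exact step.trans ((ih.1 u h).1 hq w hw)

lemma Q_of_odd_walk {a b c d : V} (hab : G.Adj a b) (hcd : G.Adj c d)
    (p : G.Walk b c) (hp : Odd p.length) :
    Q ⟨(a, b), hab⟩ ⟨(c, d), hcd⟩ :=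
  ((chain p).1 a hab).2 hp d hcd

/-- Tail colour is invariant along the relation, for a bipartite colouring. -/
lemma tail_color_invariant (C : V → Bool) (hC : ∀ u v, G.Adj u v → C u ≠ C v)
    {x y : {p : V × V // G.Adj p.1 p.2}} (hr : rel G x y) :
    C x.val.1 = C y.val.1 := by
  obtain ⟨k, a, v, ⟨h1, h2, h3, h4, h5⟩, ha0, hak⟩ := hr
  have key : ∀ i, i < k → C (a i).1 = C (a 0).1 := by
    intro i
    induction i with
    | zero => intro _; rfl
    | succ n ihn =>
        intro hik
        have hn : n < k := Nat.lt_of_succ_lt hik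
        have step : C (a (n + 1)).1 = C (a n).1 := by
          rcases h4 n hn with hA | hB
          · have hnext : a (n + 1) = (v (n + 2), v (n + 1)) := (h5 n hik).mp hA
            have adj1 : G.Adj (v n) (v (n + 1)) := by
              have := h2 n hn; rw [hA] at this; exact this
            have adj2 : G.Adj (v (n + 2)) (v (n + 1)) := by
              have := h2 (n + 1) hik; rw [hnext] at this; exact this
            have c1 := hC _ _ adj1
            have c2 := hC _ _ adj2
            rw [hA, hnext]
            simp only
            revert c1 c2
            cases C (v n) <;> cases C (v (n + 1)) <;> cases C (v (n + 2)) <;> simp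
          · have hne : v n ≠ v (n + 1) := by
              intro he
              have := h2 n hn
              rw [hB] at this
              simp only at this
              rw [he] at this
              exact G.irrefl this
            have hAfalse : a n ≠ (v n, v (n + 1)) := by
              rw [hB]
              intro he
              exact hne ((Prod.ext_iff.mp he).1).symm
            have hnext : a (n + 1) ≠ (v (n + 2), v (n + 1)) := fun he =>
              hAfalse ((h5 n hik).mpr he)
            have hnext' : a (n + 1) = (v (n + 1), v (n + 2)) := by
              rcases h4 (n + 1) hik with h | h
              · exact h
              · exact absurd h hnext
            rw [hB, hnext']
        rw [step, ihn hn]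
  have hklast : k - 1 < k := Nat.sub_lt h1 one_pos
  have := key (k - 1) hklast
  rw [ha0, hak] at this
  exact this.symm

lemma walk_parity (C : V → Bool) (hC : ∀ u v, G.Adj u v → C u ≠ C v)
    {b c : V} (p : G.Walk b c) : (C b = C c) ↔ Even p.length := by
  induction p with
  | nil => simp
  | @cons u u' v h q ih =>
      have hne := hC _ _ h
      rw [SimpleGraph.Walk.length_cons, Nat.even_add_one, ← ih]
      cases hu : C u <;> cases hu' : C u' <;> cases hv : C v <;> simp_all

lemma exists_odd_walk (hconn : G.Connected)
    (hnb : ¬∃ C : V → Bool, ∀ u v, G.Adj u v → C u ≠ C v) (b c : V) :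
    ∃ p : G.Walk b c, Odd p.length := by
  classical
  set C : V → Bool := fun x => decide (∃ p : G.Walk b x, Odd p.length) with hCdef
  have : ¬∀ u v, G.Adj u v → C u ≠ C v := fun h => hnb ⟨C, h⟩
  push_neg at this
  obtain ⟨u, v, huv, hsame⟩ := this
  -- get an odd closed walk at b
  have hW : ∃ W : G.Walk b b, Odd W.length := by
    cases hCu : C u
    · have hCv : C v = false := by rw [← hsame, hCu]
      have hu : ¬∃ p : G.Walk b u, Odd p.length := by
        simpa [hCdef] using hCu
      have hv : ¬∃ p : G.Walk b v, Odd p.length := by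
        simpa [hCdef] using hCv
      push_neg at hu hv
      obtain ⟨p1⟩ := hconn.preconnected b u
      obtain ⟨p2⟩ := hconn.preconnected b v
      refine ⟨(p1.append huv.toWalk).append p2.reverse, ?_⟩
      have e1 : Even p1.length := Nat.not_odd_iff_even.mp (hu p1)
      have e2 : Even p2.length := Nat.not_odd_iff_even.mp (hv p2)
      simp only [SimpleGraph.Walk.length_append, SimpleGraph.Walk.length_reverse]
      have : huv.toWalk.length = 1 := rfl
      rw [this]
      obtain ⟨m, hm⟩ := e1; obtain ⟨n, hn⟩ := e2
      exact ⟨m + n, by omega⟩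
    · have hCv : C v = true := by rw [← hsame, hCu]
      have hu : ∃ p : G.Walk b u, Odd p.length := by
        simpa [hCdef] using hCu
      have hv : ∃ p : G.Walk b v, Odd p.length := by
        simpa [hCdef] using hCv
      obtain ⟨p1, hp1⟩ := hu
      obtain ⟨p2, hp2⟩ := hv
      refine ⟨(p1.append huv.toWalk).append p2.reverse, ?_⟩
      simp only [SimpleGraph.Walk.length_append, SimpleGraph.Walk.length_reverse]
      have : huv.toWalk.length = 1 := rfl
      rw [this]
      obtain ⟨m, hm⟩ := hp1; obtain ⟨n, hn⟩ := hp2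
      exact ⟨m + n + 1, by omega⟩
  obtain ⟨W, hW⟩ := hW
  obtain ⟨r⟩ := hconn.preconnected b c
  by_cases hr : Odd r.length
  · exact ⟨r, hr⟩
  · refine ⟨W.append r, ?_⟩
    rw [SimpleGraph.Walk.length_append]
    have he : Even r.length := Nat.not_odd_iff_even.mp hr
    obtain ⟨m, hm⟩ := hW; obtain ⟨n, hn⟩ := he
    exact ⟨m + n, by omega⟩

end Stmt9Aux

/-- for a connected graph `G` with at least one edge, the equivalence
relation `R` on the arc set has exactly one class if `G` is not bipartite and exactly
two classes if `G` is bipartite. -/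
theorem stmt_9 {V : Type*} (G : SimpleGraph V) (hconn : G.Connected)
    (hedge : ∃ u v, G.Adj u v) :
    (¬ (∃ C : V → Bool, ∀ u v, G.Adj u v → C u ≠ C v) →
      Nat.card (Quot (fun x y : {p : V × V // G.Adj p.1 p.2} =>
        ATrailRel (fun s t => G.Adj s t) x.val y.val)) = 1) ∧
    ((∃ C : V → Bool, ∀ u v, G.Adj u v → C u ≠ C v) →
      Nat.card (Quot (fun x y : {p : V × V // G.Adj p.1 p.2} =>
        ATrailRel (fun s t => G.Adj s t) x.val y.val)) = 2) := by
  classical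
  obtain ⟨u0, v0, h0⟩ := hedge
  constructor
  · intro hnb
    show Nat.card (Quot (Stmt9Aux.rel G)) = 1
    rw [Nat.card_eq_one_iff_unique]
    constructor
    · constructor
      intro q q'
      induction q using Quot.ind with | _ x =>
      induction q' using Quot.ind with | _ y =>
      obtain ⟨⟨a, b⟩, hab⟩ := x
      obtain ⟨⟨c, d⟩, hcd⟩ := y
      obtain ⟨p, hp⟩ := Stmt9Aux.exists_odd_walk hconn hnb b c
      exact Stmt9Aux.Q_of_odd_walk hab hcd p hp
    · exact ⟨Quot.mk _ ⟨(u0, v0), h0⟩⟩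
  · rintro ⟨C, hC⟩
    show Nat.card (Quot (Stmt9Aux.rel G)) = 2
    have hcard : Nat.card (Quot (Stmt9Aux.rel G)) = Nat.card Bool := by
      apply Nat.card_eq_of_bijective (Quot.lift (fun x => C x.val.1)
        (fun x y hr => Stmt9Aux.tail_color_invariant C hC hr))
      constructor
      · intro q q'
        induction q using Quot.ind with | _ x =>
        induction q' using Quot.ind with | _ y =>
        obtain ⟨⟨a, b⟩, hab⟩ := x
        obtain ⟨⟨c, d⟩, hcd⟩ := y
        intro hce
        simp only [Quot.lift_mk] at hce
        obtain ⟨p⟩ := hconn.preconnected b c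
        have hbc : C b ≠ C c := by
          have h1 := hC _ _ hab
          intro he
          exact h1 (by rw [hce, he])
        have hodd : Odd p.length := by
          rw [← Nat.not_even_iff_odd]
          intro he
          exact hbc ((Stmt9Aux.walk_parity C hC p).mpr he)
        exact Stmt9Aux.Q_of_odd_walk hab hcd p hodd
      · intro bl
        by_cases hb : bl = C u0
        · exact ⟨Quot.mk _ ⟨(u0, v0), h0⟩, hb.symm⟩
        · refine ⟨Quot.mk _ ⟨(v0, u0), h0.symm⟩, ?_⟩
          simp only [Quot.lift_mk]
          have := hC _ _ h0
          cases hcu : C u0 <;> cases hcv : C v0 <;> simp_all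
    rw [hcard]
    simp [Nat.card_eq_fintype_card]
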